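/- With Ψ⁻¹(A,B) := ∑_{j=0}^{B−1} A^j, let D ≥ 1, d : [D] → ℕ₊, K := ∑ d(ℓ), 0 < r ≤ 1, h : [D] → ℝ nondecreasing and nonnegative. Then E_U[R(U)] ≤ C, where C := ∑_{ℓ=1}^{D} h(ℓ) r^{d_{[ℓ+1:D]}} Ψ⁻¹(r, d(ℓ)), R(u) := ∑_{ℓ=1}^{u−1} h(ℓ) r^{d_{[ℓ+1:D]}} Ψ⁻¹(r, d(ℓ)) + h(u) Ψ⁻¹(r, d_{[u:D]}), and U has distribution P[U = u] = d(u)/K. -/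

import Mathlib

/-- `Ψ⁻¹(A, B) = ∑_{j=0}^{B−1} A^j`. -/
noncomputable def psiInv (A : ℝ) (B : ℕ) : ℝ := ∑ j ∈ Finset.range B, A ^ j

/-- `d_{[a:b]} = ∑_{t=a}^{b} d(t)` (0 if `a > b`). -/
def dSum (d : ℕ → ℕ) (a b : ℕ) : ℕ := ∑ t ∈ Finset.Icc a b, d t

lemma psiInv_add (r : ℝ) (m n : ℕ) :
    psiInv r (m + n) = psiInv r m + r ^ m * psiInv r n := by
  induction n with
  | zero => simp [psiInv]
  | succ n ih =>
    simp only [psiInv] at ih ⊢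
    rw [show m + (n + 1) = (m + n) + 1 from rfl, Finset.sum_range_succ, Finset.sum_range_succ,
      ih, pow_add]
    ring

lemma psiInv_nonneg (r : ℝ) (hr : 0 ≤ r) (n : ℕ) : 0 ≤ psiInv r n :=
  Finset.sum_nonneg fun j _ => pow_nonneg hr j

lemma psiInv_key (r : ℝ) (d : ℕ → ℕ) (b : ℕ) : ∀ a,
    psiInv r (dSum d a b) =
      ∑ ℓ ∈ Finset.Icc a b, r ^ dSum d (ℓ + 1) b * psiInv r (d ℓ) := by
  induction b with
  | zero =>
    intro a
    match a with
    | 0 => simp [dSum, psiInv, Finset.Icc_eq_empty (show ¬ (1:ℕ) ≤ 0 by omega)]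
    | a + 1 => simp [dSum, psiInv, Finset.Icc_eq_empty (show ¬ a + 1 ≤ 0 by omega)]
  | succ b ih =>
    intro a
    by_cases hab : a ≤ b + 1
    · have hL : dSum d a (b + 1) = d (b + 1) + dSum d a b := by
        rw [dSum, Finset.sum_Icc_succ_top hab]; rw [dSum]; ring
      rw [hL, psiInv_add, Finset.sum_Icc_succ_top hab]
      have hempty : dSum d (b + 1 + 1) (b + 1) = 0 := by
        simp [dSum, Finset.Icc_eq_empty (show ¬ b + 1 + 1 ≤ b + 1 by omega)]
      rw [hempty]
      have hcongr : ∀ ℓ ∈ Finset.Icc a b,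
          r ^ dSum d (ℓ + 1) (b + 1) * psiInv r (d ℓ) =
          r ^ d (b + 1) * (r ^ dSum d (ℓ + 1) b * psiInv r (d ℓ)) := by
        intro ℓ hℓ
        have hℓb : ℓ ≤ b := (Finset.mem_Icc.mp hℓ).2
        have : dSum d (ℓ + 1) (b + 1) = dSum d (ℓ + 1) b + d (b + 1) := by
          rw [dSum, Finset.sum_Icc_succ_top (by omega), dSum]
        rw [this, pow_add]; ring
      rw [Finset.sum_congr rfl hcongr, ← Finset.mul_sum, ← ih a]
      ring
    · have he : Finset.Icc a (b + 1) = ∅ := Finset.Icc_eq_empty (by omega)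
      simp [dSum, he, psiInv]

/-- `C*_PIR-PNSI ≤ C_PIR-PNSI`: with `P[U = u] = d(u)/K`,
`E_U[R(U)] ≤ C = ∑_{ℓ=1}^{D} h(ℓ) r^{d_{[ℓ+1:D]}} Ψ⁻¹(r,d(ℓ))`. -/
theorem stmt7 (D : ℕ) (hD : 1 ≤ D) (d : ℕ → ℕ)
    (hd : ∀ ℓ ∈ Finset.Icc 1 D, 1 ≤ d ℓ)
    (K : ℕ) (hK : K = dSum d 1 D)
    (r : ℝ) (hr0 : 0 < r) (hr1 : r ≤ 1) (h : ℕ → ℝ)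
    (hmono : ∀ i ∈ Finset.Icc 1 D, ∀ j ∈ Finset.Icc 1 D, i ≤ j → h i ≤ h j)
    (hpos : ∀ ℓ ∈ Finset.Icc 1 D, 0 ≤ h ℓ) :
    ∑ u ∈ Finset.Icc 1 D, ((d u : ℝ) / (K : ℝ)) *
        (∑ ℓ ∈ Finset.Icc 1 (u - 1), h ℓ * r ^ dSum d (ℓ + 1) D * psiInv r (d ℓ)
          + h u * psiInv r (dSum d u D))
      ≤ ∑ ℓ ∈ Finset.Icc 1 D, h ℓ * r ^ dSum d (ℓ + 1) D * psiInv r (d ℓ) := by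
  set C := ∑ ℓ ∈ Finset.Icc 1 D, h ℓ * r ^ dSum d (ℓ + 1) D * psiInv r (d ℓ) with hC
  have hKpos : 0 < K := by
    rw [hK, dSum]
    exact Finset.sum_pos (fun t ht => hd t ht) ⟨1, Finset.mem_Icc.mpr ⟨le_refl 1, hD⟩⟩
  -- pointwise bound
  have hpoint : ∀ u ∈ Finset.Icc 1 D,
      (∑ ℓ ∈ Finset.Icc 1 (u - 1), h ℓ * r ^ dSum d (ℓ + 1) D * psiInv r (d ℓ)
        + h u * psiInv r (dSum d u D)) ≤ C := by
    intro u hu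
    obtain ⟨hu1, huD⟩ := Finset.mem_Icc.mp hu
    have hsplit : Finset.Icc 1 (u - 1) ∪ Finset.Icc u D = Finset.Icc 1 D := by
      ext x
      simp only [Finset.mem_union, Finset.mem_Icc]
      omega
    have hdisj : Disjoint (Finset.Icc 1 (u - 1)) (Finset.Icc u D) := by
      rw [Finset.disjoint_left]
      intro x hx hx'
      have := (Finset.mem_Icc.mp hx).2
      have := (Finset.mem_Icc.mp hx').1
      omega
    have hCsplit : C = ∑ ℓ ∈ Finset.Icc 1 (u - 1), h ℓ * r ^ dSum d (ℓ + 1) D * psiInv r (d ℓ)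
        + ∑ ℓ ∈ Finset.Icc u D, h ℓ * r ^ dSum d (ℓ + 1) D * psiInv r (d ℓ) := by
      rw [hC, ← hsplit, Finset.sum_union hdisj]
    rw [hCsplit]
    gcongr
    rw [psiInv_key r d D u, Finset.mul_sum]
    apply Finset.sum_le_sum
    intro ℓ hℓ
    obtain ⟨huℓ, hℓD⟩ := Finset.mem_Icc.mp hℓ
    have hℓmem : ℓ ∈ Finset.Icc 1 D := Finset.mem_Icc.mpr ⟨by omega, hℓD⟩
    have hfac : 0 ≤ r ^ dSum d (ℓ + 1) D * psiInv r (d ℓ) :=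
      mul_nonneg (pow_nonneg hr0.le _) (psiInv_nonneg r hr0.le _)
    calc h u * (r ^ dSum d (ℓ + 1) D * psiInv r (d ℓ))
        ≤ h ℓ * (r ^ dSum d (ℓ + 1) D * psiInv r (d ℓ)) := by
          exact mul_le_mul_of_nonneg_right (hmono u hu ℓ hℓmem huℓ) hfac
      _ = h ℓ * r ^ dSum d (ℓ + 1) D * psiInv r (d ℓ) := by ring
  -- sum of probabilities is 1
  have hprob : ∑ u ∈ Finset.Icc 1 D, ((d u : ℝ) / (K : ℝ)) = 1 := by
    rw [← Finset.sum_div]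
    rw [show ∑ u ∈ Finset.Icc 1 D, (d u : ℝ) = (K : ℝ) by
      rw [hK, dSum]; push_cast; ring]
    exact div_self (by positivity)
  calc ∑ u ∈ Finset.Icc 1 D, ((d u : ℝ) / (K : ℝ)) *
        (∑ ℓ ∈ Finset.Icc 1 (u - 1), h ℓ * r ^ dSum d (ℓ + 1) D * psiInv r (d ℓ)
          + h u * psiInv r (dSum d u D))
      ≤ ∑ u ∈ Finset.Icc 1 D, ((d u : ℝ) / (K : ℝ)) * C := by
        apply Finset.sum_le_sum
        intro u hu
        exact mul_le_mul_of_nonneg_left (hpoint u hu) (by positivity)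
    _ = C := by rw [← Finset.sum_mul, hprob, one_mul]
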